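/- Let d be an n-distance on X and let k ∈ {2,…,n}. If K is a constant such that d(x₁,…,xₙ) ≤ K·∑_{i=1}^k d(x₁,…,xₙ)ᵢᶻ for all x₁,…,xₙ,z ∈ X, then d(x₁,…,xₙ) ≤ (kK/n)·∑_{i=1}^n d(x₁,…,xₙ)ᵢᶻ for all x₁,…,xₙ,z ∈ X. -/

import Mathlib

open Finset Function

/-- `d` is an `n`-distance: nonnegative, vanishing exactly on constant tuples,
symmetric, and satisfying the simplex inequality. -/
structure IsNDistance {X : Type*} {n : ℕ} (d : (Fin n → X) → ℝ) : Prop where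
  nonneg : ∀ x, 0 ≤ d x
  eq_zero_iff : ∀ x, d x = 0 ↔ ∀ i j : Fin n, x i = x j
  symm : ∀ (x : Fin n → X) (σ : Equiv.Perm (Fin n)), d (x ∘ σ) = d x
  simplex : ∀ (x : Fin n → X) (z : X), d x ≤ ∑ i, d (Function.update x i z)

/-- A partial simplex inequality with constant $K$ over $k$ summands implies the full
simplex inequality with constant $kK/n$. -/
theorem full_of_partial_simplex {X : Type*} {n : ℕ} (hn : 2 ≤ n)
    (d : (Fin n → X) → ℝ) (hd : IsNDistance d)
    (k : ℕ) (hk2 : 2 ≤ k) (hkn : k ≤ n) (K : ℝ)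
    (hK : ∀ (x : Fin n → X) (z : X),
      d x ≤ K * ∑ i ∈ Finset.univ.filter (fun i : Fin n => (i : ℕ) < k),
        d (Function.update x i z)) :
    ∀ (x : Fin n → X) (z : X),
      d x ≤ ((k : ℝ) * K / n) * ∑ i, d (Function.update x i z) := by
  intro x z
  set f : Fin n → ℝ := fun i => d (Function.update x i z) with hf
  set A : Finset (Fin n) := Finset.univ.filter (fun i : Fin n => (i : ℕ) < k) with hA
  have hAcard : A.card = k := by
    rw [hA]
    rw [show (Finset.univ.filter (fun i : Fin n => (i : ℕ) < k))
        = Finset.map (Fin.castLEEmb hkn) Finset.univ by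
      ext i
      simp only [Finset.mem_filter, Finset.mem_univ, true_and, Finset.mem_map,
        Fin.castLEEmb_apply]
      constructor
      · intro h
        exact ⟨⟨i, h⟩, by simp [Fin.ext_iff]⟩
      · rintro ⟨j, rfl⟩
        exact j.isLt]
    simp
  -- Step 1: partial inequality over every k-element subset
  have key : ∀ S ∈ Finset.powersetCard k (Finset.univ : Finset (Fin n)),
      d x ≤ K * ∑ i ∈ S, f i := by
    intro S hS
    rw [Finset.mem_powersetCard] at hS
    have hScard : S.card = k := hS.2
    have hcard : Fintype.card {a // a ∈ A} = Fintype.card {a // a ∈ S} := by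
      simp [Fintype.card_coe, hAcard, hScard]
    let e : {a // a ∈ A} ≃ {a // a ∈ S} := Fintype.equivOfCardEq hcard
    let σ : Equiv.Perm (Fin n) := e.extendSubtype
    have hmem : ∀ i ∈ A, σ i ∈ S := fun i hi => e.extendSubtype_mem i hi
    have himg : A.image σ = S := by
      apply Finset.eq_of_subset_of_card_le
      · intro j hj
        obtain ⟨i, hi, rfl⟩ := Finset.mem_image.1 hj
        exact hmem i hi
      · rw [Finset.card_image_of_injective _ σ.injective, hAcard, hScard]
    have hupd : ∀ i : Fin n, Function.update (x ∘ σ) i z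
        = (Function.update x (σ i) z) ∘ σ := by
      intro i
      funext j
      simp only [Function.update, Function.comp_apply]
      by_cases h : j = i
      · subst h; simp
      · have : σ j ≠ σ i := fun hc => h (σ.injective hc)
        simp [h, this]
    calc d x = d (x ∘ σ) := (hd.symm x σ).symm
      _ ≤ K * ∑ i ∈ A, d (Function.update (x ∘ σ) i z) := hK (x ∘ σ) z
      _ = K * ∑ i ∈ A, f (σ i) := by
          congr 1
          refine Finset.sum_congr rfl fun i _ => ?_
          rw [hupd i, hd.symm]
      _ = K * ∑ j ∈ S, f j := by
          congr 1
          rw [← himg, Finset.sum_image (fun a _ b _ h => σ.injective h)]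
  -- counting: number of k-subsets containing a fixed i
  have hcount : ∀ i : Fin n,
      ((Finset.powersetCard k (Finset.univ : Finset (Fin n))).filter
        (fun S => i ∈ S)).card = (n - 1).choose (k - 1) := by
    intro i
    have : ((Finset.powersetCard k (Finset.univ : Finset (Fin n))).filter
        (fun S => i ∈ S)).card
        = (Finset.powersetCard (k - 1) ((Finset.univ : Finset (Fin n)).erase i)).card := by
      apply Finset.card_bij (fun S _ => S.erase i)
      · intro S hS
        simp only [Finset.mem_filter, Finset.mem_powersetCard] at hS
        rw [Finset.mem_powersetCard]
        refine ⟨fun j hj => ?_, ?_⟩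
        · rw [Finset.mem_erase] at hj ⊢
          exact ⟨hj.1, Finset.mem_univ _⟩
        · rw [Finset.card_erase_of_mem hS.2, hS.1.2]
      · intro S hS T hT h
        simp only [Finset.mem_filter] at hS hT
        rw [← Finset.insert_erase hS.2, ← Finset.insert_erase hT.2, h]
      · intro T hT
        rw [Finset.mem_powersetCard] at hT
        have hiT : i ∉ T := fun h => (Finset.mem_erase.1 (hT.1 h)).1 rfl
        refine ⟨insert i T, ?_, by rw [Finset.erase_insert hiT]⟩
        simp only [Finset.mem_filter, Finset.mem_powersetCard]
        refine ⟨⟨fun j _ => Finset.mem_univ j, ?_⟩, Finset.mem_insert_self i T⟩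
        rw [Finset.card_insert_of_notMem hiT, hT.2]
        omega
    rw [this, Finset.card_powersetCard, Finset.card_erase_of_mem (Finset.mem_univ i),
      Finset.card_univ, Fintype.card_fin]
  -- Step 2: sum over all k-subsets
  set P := Finset.powersetCard k (Finset.univ : Finset (Fin n)) with hP
  have hPcard : P.card = n.choose k := by
    rw [hP, Finset.card_powersetCard, Finset.card_univ, Fintype.card_fin]
  have hsum : ∑ S ∈ P, ∑ i ∈ S, f i = ((n - 1).choose (k - 1) : ℝ) * ∑ i, f i := by
    have : ∀ S ∈ P, ∑ i ∈ S, f i = ∑ i : Fin n, if i ∈ S then f i else 0 := by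
      intro S hS
      rw [Finset.sum_ite_mem]
      congr 1
      rw [Finset.mem_powersetCard] at hS
      exact (Finset.inter_eq_right.2 hS.1).symm
    rw [Finset.sum_congr rfl this, Finset.sum_comm, Finset.mul_sum]
    refine Finset.sum_congr rfl fun i _ => ?_
    rw [← Finset.sum_filter, Finset.sum_const, hcount i, nsmul_eq_mul]
  have hmain : (n.choose k : ℝ) * d x ≤ K * ((n - 1).choose (k - 1) : ℝ) * ∑ i, f i := by
    calc (n.choose k : ℝ) * d x = ∑ _S ∈ P, d x := by
          rw [Finset.sum_const, hPcard, nsmul_eq_mul]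
      _ ≤ ∑ S ∈ P, K * ∑ i ∈ S, f i := Finset.sum_le_sum key
      _ = K * ∑ S ∈ P, ∑ i ∈ S, f i := by rw [Finset.mul_sum]
      _ = K * ((n - 1).choose (k - 1) : ℝ) * ∑ i, f i := by rw [hsum, mul_assoc]
  -- arithmetic identity: n * C(n-1,k-1) = k * C(n,k)
  have hid : n * (n - 1).choose (k - 1) = k * n.choose k := by
    obtain ⟨m, rfl⟩ : ∃ m, n = m + 1 := ⟨n - 1, by omega⟩
    obtain ⟨l, rfl⟩ : ∃ l, k = l + 1 := ⟨k - 1, by omega⟩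
    simpa [Nat.mul_comm] using Nat.add_one_mul_choose_eq m l
  have hCpos : (0 : ℝ) < (n.choose k : ℝ) := by
    exact_mod_cast Nat.choose_pos hkn
  have hnpos : (0 : ℝ) < (n : ℝ) := by positivity
  rw [← mul_le_mul_iff_right₀ hCpos]
  calc (n.choose k : ℝ) * d x
      ≤ K * ((n - 1).choose (k - 1) : ℝ) * ∑ i, f i := hmain
    _ = (n.choose k : ℝ) * (((k : ℝ) * K / n) * ∑ i, f i) := by
        have : ((n : ℝ)) * ((n - 1).choose (k - 1) : ℝ) = (k : ℝ) * (n.choose k : ℝ) := by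
          exact_mod_cast hid
        have h2 : ((n - 1).choose (k - 1) : ℝ) = (k : ℝ) * (n.choose k : ℝ) / n := by
          field_simp
          linarith [this]
        rw [h2]
        ring
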